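/- For every N≥1 and every π∈S^M, V₀(π) ≤ V^N(π) ≤ V₀(π) + (‖h‖²/c + ‖h‖/p)·(1/N), where ‖h‖ = sup_{π∈S^M}|h(π)|; in particular V^N converges to V₀ uniformly on S^M as N→∞. -/

import Mathlib

open MeasureTheory Finset Filter
open scoped ENNReal

noncomputable section

/-- The analytic data of the change-diagnosis problem: a σ-finite reference measure `m`
on the observation space, probability densities `f₀, …, f_M`, the geometric parameter
`p ∈ (0,1)`, the prior `ν` on the change index, the delay cost `c > 0` and the
terminal-decision costs `a_{ij}` (with `a_{ii} = 0`). -/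
structure DiagSetup (E : Type*) [MeasurableSpace E] (M : ℕ) : Type _ where
  /-- σ-finite reference measure -/
  m : Measure E
  hm : SigmaFinite m
  /-- `f 0` is the pre-change density, `f i.succ` the post-change densities -/
  f : Fin (M + 1) → E → ℝ
  hf_meas : ∀ i, Measurable (f i)
  hf_nonneg : ∀ i x, 0 ≤ f i x
  hf_int : ∀ i, ∫ x, f i x ∂m = 1
  p : ℝ
  hp : p ∈ Set.Ioo (0 : ℝ) 1
  ν : Fin M → ℝ
  hν : ∀ i, 0 < ν i
  hνsum : ∑ i, ν i = 1
  c : ℝ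
  hc : 0 < c
  a : Fin (M + 1) → Fin M → ℝ
  ha : ∀ i j, 0 ≤ a i j
  haii : ∀ i : Fin M, a i.succ i = 0
  hM : 1 ≤ M

namespace DiagSetup

variable {E : Type*} [MeasurableSpace E] {M : ℕ}

/-- `D_i(π, x)`:  `D₀(π,x) = (1-p)π₀f₀(x)` and `D_i(π,x) = (π_i + π₀ p ν_i) f_i(x)`. -/
def D (S : DiagSetup E M) (i : Fin (M + 1)) (π : Fin (M + 1) → ℝ) (x : E) : ℝ :=
  Fin.cases ((1 - S.p) * π 0 * S.f 0 x)
    (fun j => (π j.succ + π 0 * S.p * S.ν j) * S.f j.succ x) i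

/-- `D(π, x) = Σ_{i=0}^M D_i(π, x)`. -/
def Dsum (S : DiagSetup E M) (π : Fin (M + 1) → ℝ) (x : E) : ℝ :=
  ∑ i, S.D i π x

/-- The operator `T`:
`(Tg)(π) = ∫_E D(π,x) g(D₀(π,x)/D(π,x), …, D_M(π,x)/D(π,x)) m(dx)`,
with the integrand interpreted as `0` where `D(π,x) = 0`. -/
def T (S : DiagSetup E M) (g : (Fin (M + 1) → ℝ) → ℝ) (π : Fin (M + 1) → ℝ) : ℝ :=
  ∫ x, (if S.Dsum π x = 0 then 0
        else S.Dsum π x * g fun i => S.D i π x / S.Dsum π x) ∂S.m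

/-- `h_j(π) = Σ_{i=0}^M π_i a_{ij}`. -/
def hj (S : DiagSetup E M) (j : Fin M) (π : Fin (M + 1) → ℝ) : ℝ :=
  ∑ i : Fin (M + 1), π i * S.a i j

/-- `h(π) = min_{j∈{1,…,M}} h_j(π)`. -/
def hmin (S : DiagSetup E M) (π : Fin (M + 1) → ℝ) : ℝ :=
  ⨅ j : Fin M, S.hj j π

/-- The dynamic-programming operator `(𝕄g)(π) = min{h(π), c(1-π₀) + (Tg)(π)}`. -/
def Mop (S : DiagSetup E M) (g : (Fin (M + 1) → ℝ) → ℝ) (π : Fin (M + 1) → ℝ) : ℝ :=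
  min (S.hmin π) (S.c * (1 - π 0) + S.T g π)

/-- `V^N = 𝕄^N h`, the value functions of the truncated problems. -/
def V (S : DiagSetup E M) (N : ℕ) : (Fin (M + 1) → ℝ) → ℝ :=
  S.Mop^[N] S.hmin

end DiagSetup

namespace DiagSetup

variable {E : Type*} [MeasurableSpace E] {M : ℕ}

-- ====================== auxiliary development ======================

variable (S : DiagSetup E M)

local notation "σ" => stdSimplex ℝ (Fin (M + 1))

lemma mem_simplex_nonneg {π : Fin (M + 1) → ℝ} (hπ : π ∈ σ) (i : Fin (M + 1)) : 0 ≤ π i :=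
  hπ.1 i

lemma mem_simplex_sum {π : Fin (M + 1) → ℝ} (hπ : π ∈ σ) : ∑ i, π i = 1 := hπ.2

lemma mem_simplex_le_one {π : Fin (M + 1) → ℝ} (hπ : π ∈ σ) (i : Fin (M + 1)) : π i ≤ 1 := by
  have := Finset.single_le_sum (f := π) (fun j _ => hπ.1 j) (Finset.mem_univ i)
  simpa [hπ.2] using this

lemma hf_integrable (i : Fin (M + 1)) : Integrable (S.f i) S.m := by
  by_contra h
  have := integral_undef h
  rw [S.hf_int i] at this
  norm_num at this

lemma D_zero (π : Fin (M + 1) → ℝ) (x : E) :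
    S.D 0 π x = (1 - S.p) * π 0 * S.f 0 x := rfl

lemma D_succ (j : Fin M) (π : Fin (M + 1) → ℝ) (x : E) :
    S.D j.succ π x = (π j.succ + π 0 * S.p * S.ν j) * S.f j.succ x := by
  simp [D]

lemma D_nonneg {π : Fin (M + 1) → ℝ} (hπ : π ∈ σ) (i : Fin (M + 1)) (x : E) :
    0 ≤ S.D i π x := by
  induction i using Fin.cases with
  | zero =>
    rw [D_zero]
    have h1 : 0 ≤ 1 - S.p := by linarith [S.hp.2]
    have h2 : 0 ≤ π 0 := hπ.1 _
    have := S.hf_nonneg 0 x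
    positivity
  | succ j =>
    rw [D_succ]
    have h1 : 0 ≤ π j.succ := hπ.1 _
    have h2 : 0 ≤ π 0 := hπ.1 _
    have h3 : 0 ≤ S.p := le_of_lt S.hp.1
    have h4 : 0 ≤ S.ν j := le_of_lt (S.hν j)
    have := S.hf_nonneg j.succ x
    positivity

lemma Dsum_nonneg {π : Fin (M + 1) → ℝ} (hπ : π ∈ σ) (x : E) : 0 ≤ S.Dsum π x :=
  Finset.sum_nonneg fun i _ => S.D_nonneg hπ i x

lemma D_meas_x (i : Fin (M + 1)) (π : Fin (M + 1) → ℝ) : Measurable fun x => S.D i π x := by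
  induction i using Fin.cases with
  | zero => simpa [D] using (S.hf_meas 0).const_mul _
  | succ j => simpa [D] using (S.hf_meas j.succ).const_mul _

lemma Dsum_meas_x (π : Fin (M + 1) → ℝ) : Measurable fun x => S.Dsum π x := by
  unfold Dsum
  exact Finset.measurable_sum _ fun i _ => S.D_meas_x i π

lemma D_integrable (i : Fin (M + 1)) (π : Fin (M + 1) → ℝ) :
    Integrable (fun x => S.D i π x) S.m := by
  induction i using Fin.cases with
  | zero => simpa [D] using (S.hf_integrable 0).const_mul ((1 - S.p) * π 0)
  | succ j => simpa [D] using (S.hf_integrable j.succ).const_mul (π j.succ + π 0 * S.p * S.ν j)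

lemma Dsum_integrable (π : Fin (M + 1) → ℝ) : Integrable (fun x => S.Dsum π x) S.m := by
  unfold Dsum
  exact integrable_finset_sum _ fun i _ => S.D_integrable i π

lemma integral_D_zero (π : Fin (M + 1) → ℝ) :
    ∫ x, S.D 0 π x ∂S.m = (1 - S.p) * π 0 := by
  simp only [D_zero]
  rw [MeasureTheory.integral_const_mul, S.hf_int 0, mul_one]

lemma integral_D_succ (j : Fin M) (π : Fin (M + 1) → ℝ) :
    ∫ x, S.D j.succ π x ∂S.m = π j.succ + π 0 * S.p * S.ν j := by
  simp only [D_succ]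
  rw [MeasureTheory.integral_const_mul, S.hf_int j.succ, mul_one]

lemma integral_Dsum {π : Fin (M + 1) → ℝ} (hπ : π ∈ σ) :
    ∫ x, S.Dsum π x ∂S.m = 1 := by
  unfold Dsum
  rw [integral_finset_sum _ (fun i _ => S.D_integrable i π)]
  rw [Fin.sum_univ_succ]
  simp only [integral_D_zero, integral_D_succ]
  have hsum : π 0 + ∑ j : Fin M, π j.succ = 1 := by
    have := hπ.2
    rwa [Fin.sum_univ_succ] at this
  have : ∑ j : Fin M, (π j.succ + π 0 * S.p * S.ν j)
      = (∑ j : Fin M, π j.succ) + π 0 * S.p * (∑ j, S.ν j) := by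
    rw [Finset.sum_add_distrib, Finset.mul_sum]
  rw [this, S.hνsum]
  nlinarith [hπ.2]

lemma ratio_mem {π : Fin (M + 1) → ℝ} (hπ : π ∈ σ) {x : E} (hx : S.Dsum π x ≠ 0) :
    (fun i => S.D i π x / S.Dsum π x) ∈ σ := by
  have hpos : 0 < S.Dsum π x := lt_of_le_of_ne (S.Dsum_nonneg hπ x) (Ne.symm hx)
  constructor
  · intro i
    exact div_nonneg (S.D_nonneg hπ i x) hpos.le
  · rw [← Finset.sum_div]
    exact div_self hx


-- ============ Part B : T operator lemmas ============

def itg (g : (Fin (M + 1) → ℝ) → ℝ) (π : Fin (M + 1) → ℝ) (x : E) : ℝ :=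
  if S.Dsum π x = 0 then 0 else S.Dsum π x * g fun i => S.D i π x / S.Dsum π x

lemma T_eq (g : (Fin (M + 1) → ℝ) → ℝ) (π : Fin (M + 1) → ℝ) :
    S.T g π = ∫ x, S.itg g π x ∂S.m := rfl

/-- measurability in x -/
lemma itg_meas_x {g : (Fin (M + 1) → ℝ) → ℝ} (hg : Measurable g) (π : Fin (M + 1) → ℝ) :
    Measurable (S.itg g π) := by
  unfold itg
  have hD : Measurable fun x => S.Dsum π x := S.Dsum_meas_x π
  refine Measurable.ite (hD (measurableSet_singleton 0)) measurable_const ?_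
  refine hD.mul (hg.comp ?_)
  exact measurable_pi_lambda _ fun i => (S.D_meas_x i π).div hD

/-- pointwise bound -/
lemma itg_abs_le {g : (Fin (M + 1) → ℝ) → ℝ} {B : ℝ}
    (hB : ∀ π' ∈ σ, |g π'| ≤ B) {π : Fin (M + 1) → ℝ} (hπ : π ∈ σ) (x : E) :
    |S.itg g π x| ≤ B * S.Dsum π x := by
  unfold itg
  by_cases h : S.Dsum π x = 0
  · simp [h]
  · simp only [h, if_false]
    have hpos : 0 < S.Dsum π x := lt_of_le_of_ne (S.Dsum_nonneg hπ x) (Ne.symm h)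
    rw [abs_mul, abs_of_pos hpos]
    calc S.Dsum π x * |g fun i => S.D i π x / S.Dsum π x|
        ≤ S.Dsum π x * B := by
          exact mul_le_mul_of_nonneg_left (hB _ (S.ratio_mem hπ h)) hpos.le
      _ = B * S.Dsum π x := mul_comm _ _

lemma itg_integrable {g : (Fin (M + 1) → ℝ) → ℝ} (hg : Measurable g) {B : ℝ}
    (hB : ∀ π' ∈ σ, |g π'| ≤ B) {π : Fin (M + 1) → ℝ} (hπ : π ∈ σ) :
    Integrable (S.itg g π) S.m := by
  refine Integrable.mono ((S.Dsum_integrable π).const_mul B)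
    (S.itg_meas_x hg π).aestronglyMeasurable ?_
  refine Filter.Eventually.of_forall fun x => ?_
  have h1 := S.itg_abs_le hB hπ x
  have h2 : 0 ≤ S.Dsum π x := S.Dsum_nonneg hπ x
  simp only [Real.norm_eq_abs]
  calc |S.itg g π x| ≤ B * S.Dsum π x := h1
    _ ≤ |B * S.Dsum π x| := le_abs_self _

lemma itg_nonneg {g : (Fin (M + 1) → ℝ) → ℝ}
    (hg : ∀ π' ∈ σ, 0 ≤ g π') {π : Fin (M + 1) → ℝ} (hπ : π ∈ σ) (x : E) :
    0 ≤ S.itg g π x := by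
  unfold itg
  by_cases h : S.Dsum π x = 0
  · simp [h]
  · simp only [h, if_false]
    exact mul_nonneg (S.Dsum_nonneg hπ x) (hg _ (S.ratio_mem hπ h))

lemma T_nonneg {g : (Fin (M + 1) → ℝ) → ℝ}
    (hg : ∀ π' ∈ σ, 0 ≤ g π') {π : Fin (M + 1) → ℝ} (hπ : π ∈ σ) :
    0 ≤ S.T g π :=
  integral_nonneg fun x => S.itg_nonneg hg hπ x

lemma T_mono {g₁ g₂ : (Fin (M + 1) → ℝ) → ℝ} (hg₂m : Measurable g₂) {B : ℝ}
    (hB : ∀ π' ∈ σ, |g₂ π'| ≤ B)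
    (h1 : ∀ π' ∈ σ, 0 ≤ g₁ π') (h12 : ∀ π' ∈ σ, g₁ π' ≤ g₂ π')
    {π : Fin (M + 1) → ℝ} (hπ : π ∈ σ) : S.T g₁ π ≤ S.T g₂ π := by
  rw [T_eq, T_eq]
  refine integral_mono_of_nonneg (Filter.Eventually.of_forall fun x => S.itg_nonneg h1 hπ x)
    (S.itg_integrable hg₂m hB hπ) (Filter.Eventually.of_forall fun x => ?_)
  unfold itg
  by_cases h : S.Dsum π x = 0
  · simp [h]
  · simp only [h, if_false]
    exact mul_le_mul_of_nonneg_left (h12 _ (S.ratio_mem hπ h))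
      (S.Dsum_nonneg hπ x)

lemma T_add {g₁ g₂ : (Fin (M + 1) → ℝ) → ℝ} (h1m : Measurable g₁) (h2m : Measurable g₂)
    {B₁ B₂ : ℝ} (hB₁ : ∀ π' ∈ σ, |g₁ π'| ≤ B₁) (hB₂ : ∀ π' ∈ σ, |g₂ π'| ≤ B₂)
    {π : Fin (M + 1) → ℝ} (hπ : π ∈ σ) :
    S.T (fun π' => g₁ π' + g₂ π') π = S.T g₁ π + S.T g₂ π := by
  rw [T_eq, T_eq, T_eq]
  rw [show S.itg (fun π' => g₁ π' + g₂ π') π = fun x => S.itg g₁ π x + S.itg g₂ π x from ?_]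
  · exact integral_add (S.itg_integrable h1m hB₁ hπ) (S.itg_integrable h2m hB₂ hπ)
  · funext x
    unfold itg
    by_cases h : S.Dsum π x = 0 <;> simp [h, mul_add]

lemma T_const_mul (r : ℝ) (g : (Fin (M + 1) → ℝ) → ℝ) (π : Fin (M + 1) → ℝ) :
    S.T (fun π' => r * g π') π = r * S.T g π := by
  rw [T_eq, T_eq, ← MeasureTheory.integral_const_mul]
  congr 1
  funext x
  unfold itg
  by_cases h : S.Dsum π x = 0 <;> simp [h] <;> ring

lemma T_one {π : Fin (M + 1) → ℝ} (hπ : π ∈ σ) : S.T (fun _ => (1:ℝ)) π = 1 := by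
  rw [T_eq]
  rw [show S.itg (fun _ => (1:ℝ)) π = fun x => S.Dsum π x from ?_]
  · exact S.integral_Dsum hπ
  · funext x
    unfold itg
    by_cases h : S.Dsum π x = 0 <;> simp [h]

lemma T_e {π : Fin (M + 1) → ℝ} (hπ : π ∈ σ) :
    S.T (fun π' => π' 0) π = (1 - S.p) * π 0 := by
  rw [T_eq]
  rw [show S.itg (fun π' => π' 0) π = fun x => S.D 0 π x from ?_]
  · exact S.integral_D_zero π
  · funext x
    unfold itg
    by_cases h : S.Dsum π x = 0
    · simp only [h, if_true]
      -- D 0 π x = 0 since all terms nonneg and sum 0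
      have h0 : ∀ i ∈ Finset.univ, 0 ≤ S.D i π x := fun i _ => S.D_nonneg hπ i x
      have := (Finset.sum_eq_zero_iff_of_nonneg h0).1 h 0 (Finset.mem_univ 0)
      rw [this]
    · simp only [h, if_false]
      field_simp

/-- joint measurability of D -/
lemma D_meas_joint (i : Fin (M + 1)) :
    Measurable fun q : (Fin (M + 1) → ℝ) × E => S.D i q.1 q.2 := by
  induction i using Fin.cases with
  | zero =>
    simp only [D_zero]
    exact (((measurable_const.mul ((measurable_pi_apply 0).comp measurable_fst))).mul
      ((S.hf_meas 0).comp measurable_snd))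
  | succ j =>
    simp only [D_succ]
    refine Measurable.mul ?_ ((S.hf_meas j.succ).comp measurable_snd)
    exact ((measurable_pi_apply j.succ).comp measurable_fst).add
      ((((measurable_pi_apply 0).comp measurable_fst).mul measurable_const).mul measurable_const)

lemma Dsum_meas_joint : Measurable fun q : (Fin (M + 1) → ℝ) × E => S.Dsum q.1 q.2 := by
  unfold Dsum
  exact Finset.measurable_sum _ fun i _ => S.D_meas_joint i

lemma T_meas {g : (Fin (M + 1) → ℝ) → ℝ} (hg : Measurable g) : Measurable (S.T g) := by
  haveI := S.hm
  have hjoint : Measurable fun q : (Fin (M + 1) → ℝ) × E => S.itg g q.1 q.2 := by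
    unfold itg
    refine Measurable.ite (S.Dsum_meas_joint (measurableSet_singleton 0)) measurable_const ?_
    refine S.Dsum_meas_joint.mul (hg.comp ?_)
    exact measurable_pi_lambda _ fun i => (S.D_meas_joint i).div S.Dsum_meas_joint
  have := MeasureTheory.StronglyMeasurable.integral_prod_right
    (ν := S.m) (f := fun π x => S.itg g π x) (hjoint.stronglyMeasurable)
  exact this.measurable


-- ============ Part C : hmin, L, V ============

lemma finM_nonempty (S : DiagSetup E M) : Nonempty (Fin M) :=
  ⟨⟨0, Nat.lt_of_lt_of_le Nat.zero_lt_one S.hM⟩⟩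

def Amax : ℝ := ∑ i, ∑ j, S.a i j

lemma a_le_Amax (i : Fin (M + 1)) (j : Fin M) : S.a i j ≤ S.Amax := by
  unfold Amax
  calc S.a i j ≤ ∑ j', S.a i j' :=
        Finset.single_le_sum (fun j' _ => S.ha i j') (Finset.mem_univ j)
    _ ≤ ∑ i', ∑ j', S.a i' j' :=
        Finset.single_le_sum (fun i' _ => Finset.sum_nonneg fun j' _ => S.ha i' j')
          (Finset.mem_univ i)

lemma hj_nonneg (j : Fin M) {π : Fin (M + 1) → ℝ} (hπ : π ∈ σ) : 0 ≤ S.hj j π :=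
  Finset.sum_nonneg fun i _ => mul_nonneg (hπ.1 i) (S.ha i j)

lemma hj_le_Amax (j : Fin M) {π : Fin (M + 1) → ℝ} (hπ : π ∈ σ) : S.hj j π ≤ S.Amax := by
  unfold hj
  calc ∑ i, π i * S.a i j ≤ ∑ i, π i * S.Amax := by
        refine Finset.sum_le_sum fun i _ => ?_
        exact mul_le_mul_of_nonneg_left (S.a_le_Amax i j) (hπ.1 i)
    _ = S.Amax := by rw [← Finset.sum_mul, hπ.2, one_mul]

lemma hj_meas (j : Fin M) : Measurable (S.hj j) := by
  unfold hj
  exact Finset.measurable_sum _ fun i _ => (measurable_pi_apply i).mul measurable_const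

lemma hmin_meas : Measurable S.hmin := by
  haveI := finM_nonempty S
  exact Measurable.iInf fun j => S.hj_meas j

lemma hmin_nonneg {π : Fin (M + 1) → ℝ} (hπ : π ∈ σ) : 0 ≤ S.hmin π := by
  haveI := finM_nonempty S
  exact le_ciInf fun j => S.hj_nonneg j hπ

lemma hmin_le_Amax {π : Fin (M + 1) → ℝ} (hπ : π ∈ σ) : S.hmin π ≤ S.Amax := by
  haveI := finM_nonempty S
  obtain ⟨j⟩ := finM_nonempty S
  calc S.hmin π ≤ S.hj j π :=
        ciInf_le (Set.Finite.bddBelow (Set.finite_range _)) j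
    _ ≤ S.Amax := S.hj_le_Amax j hπ

def L : ℝ := ⨆ π' : σ, |S.hmin π'|

lemma L_bddAbove : BddAbove (Set.range fun π' : σ => |S.hmin π'|) := by
  refine ⟨S.Amax, ?_⟩
  rintro x ⟨π', rfl⟩
  show |S.hmin π'| ≤ S.Amax
  rw [abs_of_nonneg (S.hmin_nonneg (π := π') π'.2)]
  exact S.hmin_le_Amax π'.2

lemma abs_hmin_le_L {π : Fin (M + 1) → ℝ} (hπ : π ∈ σ) : |S.hmin π| ≤ S.L :=
  le_ciSup S.L_bddAbove (⟨π, hπ⟩ : σ)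

lemma hmin_le_L {π : Fin (M + 1) → ℝ} (hπ : π ∈ σ) : S.hmin π ≤ S.L :=
  le_trans (le_abs_self _) (S.abs_hmin_le_L hπ)

lemma simplex_ne : ((fun i => if i = 0 then 1 else 0) : Fin (M + 1) → ℝ) ∈ σ := by
  constructor
  · intro i
    by_cases h : i = 0 <;> simp [h]
  · simp

lemma L_nonneg : 0 ≤ S.L :=
  le_trans (abs_nonneg _) (S.abs_hmin_le_L simplex_ne)

lemma V_zero : S.V 0 = S.hmin := rfl

lemma V_succ (N : ℕ) : S.V (N + 1) = S.Mop (S.V N) :=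
  Function.iterate_succ_apply' _ _ _

lemma V_meas (N : ℕ) : Measurable (S.V N) := by
  induction N with
  | zero => exact S.hmin_meas
  | succ N ih =>
    rw [V_succ]
    unfold Mop
    exact S.hmin_meas.min ((measurable_const.mul
      (measurable_const.sub (measurable_pi_apply 0))).add (S.T_meas ih))

lemma V_le_hmin (N : ℕ) (π : Fin (M + 1) → ℝ) : S.V N π ≤ S.hmin π := by
  cases N with
  | zero => exact le_rfl
  | succ N => rw [V_succ]; exact min_le_left _ _

lemma V_nonneg (N : ℕ) : ∀ π ∈ σ, 0 ≤ S.V N π := by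
  induction N with
  | zero => exact fun π hπ => S.hmin_nonneg hπ
  | succ N ih =>
    intro π hπ
    rw [V_succ]
    refine le_min (S.hmin_nonneg hπ) (add_nonneg ?_ (S.T_nonneg ih hπ))
    have := mem_simplex_le_one hπ 0
    nlinarith [S.hc]

lemma abs_V_le_L (N : ℕ) {π : Fin (M + 1) → ℝ} (hπ : π ∈ σ) : |S.V N π| ≤ S.L := by
  rw [abs_of_nonneg (S.V_nonneg N π hπ)]
  exact le_trans (S.V_le_hmin N π) (S.hmin_le_L hπ)

lemma Mop_mono {g₁ g₂ : (Fin (M + 1) → ℝ) → ℝ} (hg₂m : Measurable g₂) {B : ℝ}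
    (hB : ∀ π' ∈ σ, |g₂ π'| ≤ B)
    (h1 : ∀ π' ∈ σ, 0 ≤ g₁ π') (h12 : ∀ π' ∈ σ, g₁ π' ≤ g₂ π')
    {π : Fin (M + 1) → ℝ} (hπ : π ∈ σ) : S.Mop g₁ π ≤ S.Mop g₂ π :=
  min_le_min le_rfl (add_le_add le_rfl (S.T_mono hg₂m hB h1 h12 hπ))

lemma V_antitone_step (N : ℕ) : ∀ π ∈ σ, S.V (N + 1) π ≤ S.V N π := by
  induction N with
  | zero =>
    intro π hπ
    rw [V_succ, V_zero]
    exact min_le_left _ _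
  | succ N ih =>
    intro π hπ
    calc S.V (N + 1 + 1) π = S.Mop (S.V (N + 1)) π := by rw [V_succ]
      _ ≤ S.Mop (S.V N) π :=
          S.Mop_mono (S.V_meas N) (fun π' hπ' => S.abs_V_le_L N hπ')
            (S.V_nonneg (N + 1)) ih hπ
      _ = S.V (N + 1) π := by rw [V_succ]

lemma V_antitone {N N' : ℕ} (h : N ≤ N') : ∀ π ∈ σ, S.V N' π ≤ S.V N π := by
  induction N' with
  | zero =>
    intro π hπ
    obtain rfl : N = 0 := Nat.le_zero.1 h
    exact le_rfl
  | succ N' ih =>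
    intro π hπ
    rcases Nat.lt_or_ge N (N' + 1) with h' | h'
    · exact le_trans (S.V_antitone_step N' π hπ) (ih (Nat.lt_succ_iff.1 h') π hπ)
    · obtain rfl : N = N' + 1 := le_antisymm h h'
      exact le_rfl


-- ============ Part D : contSet, H, J, K ============

open scoped Classical

def contSet (k : ℕ) : Set (Fin (M + 1) → ℝ) :=
  {π | S.c * (1 - π 0) + S.T (S.V k) π < S.hmin π}

lemma contSet_meas (k : ℕ) : MeasurableSet (S.contSet k) :=
  measurableSet_lt ((measurable_const.mul
    (measurable_const.sub (measurable_pi_apply 0))).add (S.T_meas (S.V_meas k)))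
    S.hmin_meas

lemma V_succ_of_mem {k : ℕ} {π : Fin (M + 1) → ℝ} (h : π ∈ S.contSet k) :
    S.V (k + 1) π = S.c * (1 - π 0) + S.T (S.V k) π := by
  rw [V_succ]; exact min_eq_right (le_of_lt h)

lemma V_succ_of_not_mem {k : ℕ} {π : Fin (M + 1) → ℝ} (h : π ∉ S.contSet k) :
    S.V (k + 1) π = S.hmin π := by
  rw [V_succ]; exact min_eq_left (le_of_not_gt h)

lemma V_succ_le {k : ℕ} (π : Fin (M + 1) → ℝ) :
    S.V (k + 1) π ≤ S.c * (1 - π 0) + S.T (S.V k) π := by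
  rw [V_succ]; exact min_le_right _ _

def Hf (S : DiagSetup E M) : ℕ → ℕ → (Fin (M + 1) → ℝ) → ℝ
  | _, 0 => fun _ => 1
  | 0, _ + 1 => fun _ => 0
  | m + 1, s + 1 => fun π => if π ∈ S.contSet m then S.T (Hf S m s) π else 0

def Jf (S : DiagSetup E M) : ℕ → ℕ → (Fin (M + 1) → ℝ) → ℝ
  | 0, _ => fun _ => 0
  | m + 1, 0 => fun π => if π ∈ S.contSet m then 1 - π 0 else 0
  | m + 1, s + 1 => fun π => if π ∈ S.contSet m then S.T (Jf S m s) π else 0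

def Kf (S : DiagSetup E M) : ℕ → ℕ → (Fin (M + 1) → ℝ) → ℝ
  | _, 0 => fun π => π 0
  | 0, _ + 1 => fun _ => 0
  | m + 1, s + 1 => fun π => if π ∈ S.contSet m then S.T (Kf S m s) π else 0

lemma Hf_m_zero (m : ℕ) : S.Hf m 0 = fun _ => 1 := by cases m <;> rfl
lemma Hf_zero_succ (s : ℕ) : S.Hf 0 (s + 1) = fun _ => 0 := rfl
lemma Hf_succ_succ (m s : ℕ) : S.Hf (m + 1) (s + 1)
    = fun π => if π ∈ S.contSet m then S.T (S.Hf m s) π else 0 := rfl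

lemma Jf_zero (s : ℕ) : S.Jf 0 s = fun _ => 0 := by cases s <;> rfl
lemma Jf_succ_zero (m : ℕ) : S.Jf (m + 1) 0
    = fun π => if π ∈ S.contSet m then 1 - π 0 else 0 := rfl
lemma Jf_succ_succ (m s : ℕ) : S.Jf (m + 1) (s + 1)
    = fun π => if π ∈ S.contSet m then S.T (S.Jf m s) π else 0 := rfl

lemma Kf_m_zero (m : ℕ) : S.Kf m 0 = fun π => π 0 := by cases m <;> rfl
lemma Kf_zero_succ (s : ℕ) : S.Kf 0 (s + 1) = fun _ => 0 := rfl
lemma Kf_succ_succ (m s : ℕ) : S.Kf (m + 1) (s + 1)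
    = fun π => if π ∈ S.contSet m then S.T (S.Kf m s) π else 0 := rfl

/-- bundled niceness: measurable and in [0,1] on the simplex -/
def Nice (g : (Fin (M + 1) → ℝ) → ℝ) : Prop :=
  Measurable g ∧ ∀ π ∈ σ, 0 ≤ g π ∧ g π ≤ 1

lemma Nice.abs_le {g : (Fin (M + 1) → ℝ) → ℝ} (hg : Nice g) :
    ∀ π ∈ σ, |g π| ≤ 1 := fun π hπ => by
  rw [abs_of_nonneg (hg.2 π hπ).1]; exact (hg.2 π hπ).2

lemma T_le_one {g : (Fin (M + 1) → ℝ) → ℝ} (hg : Nice g)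
    {π : Fin (M + 1) → ℝ} (hπ : π ∈ σ) : S.T g π ≤ 1 := by
  have h := S.T_mono (g₁ := g) (g₂ := fun _ => (1:ℝ)) measurable_const
    (B := 1) (fun π' _ => by norm_num) (fun π' hπ' => (hg.2 π' hπ').1)
    (fun π' hπ' => (hg.2 π' hπ').2) hπ
  rwa [S.T_one hπ] at h

lemma Nice_T {g : (Fin (M + 1) → ℝ) → ℝ} (hg : Nice g) (k : ℕ) :
    Nice (fun π => if π ∈ S.contSet k then S.T g π else 0) := by
  constructor
  · exact Measurable.ite (S.contSet_meas k) (S.T_meas hg.1) measurable_const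
  · intro π hπ
    by_cases h : π ∈ S.contSet k
    · simp only [h, if_true]
      exact ⟨S.T_nonneg (fun π' hπ' => (hg.2 π' hπ').1) hπ, S.T_le_one hg hπ⟩
    · simp only [h, if_false]
      norm_num

lemma Nice_Hf (m s : ℕ) : Nice (S.Hf m s) := by
  induction m generalizing s with
  | zero =>
    cases s with
    | zero => rw [Hf_m_zero]; exact ⟨measurable_const, fun _ _ => by norm_num⟩
    | succ s => rw [Hf_zero_succ]; exact ⟨measurable_const, fun _ _ => by norm_num⟩
  | succ m ih =>
    cases s with
    | zero => rw [Hf_m_zero]; exact ⟨measurable_const, fun _ _ => by norm_num⟩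
    | succ s => rw [Hf_succ_succ]; exact S.Nice_T (ih s) m

lemma Nice_Jf (m s : ℕ) : Nice (S.Jf m s) := by
  induction m generalizing s with
  | zero => rw [Jf_zero]; exact ⟨measurable_const, fun _ _ => by norm_num⟩
  | succ m ih =>
    cases s with
    | zero =>
      rw [Jf_succ_zero]
      constructor
      · exact Measurable.ite (S.contSet_meas m)
          (measurable_const.sub (measurable_pi_apply 0)) measurable_const
      · intro π hπ
        have h0 : 0 ≤ π 0 := hπ.1 0
        have h1 : π 0 ≤ 1 := mem_simplex_le_one hπ 0
        by_cases h : π ∈ S.contSet m <;> simp only [h, if_true, if_false] <;>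
          constructor <;> linarith
    | succ s => rw [Jf_succ_succ]; exact S.Nice_T (ih s) m

lemma Nice_Kf (m s : ℕ) : Nice (S.Kf m s) := by
  induction m generalizing s with
  | zero =>
    cases s with
    | zero =>
      rw [Kf_m_zero]
      exact ⟨measurable_pi_apply 0, fun π hπ => ⟨hπ.1 0, mem_simplex_le_one hπ 0⟩⟩
    | succ s => rw [Kf_zero_succ]; exact ⟨measurable_const, fun _ _ => by norm_num⟩
  | succ m ih =>
    cases s with
    | zero =>
      rw [Kf_m_zero]
      exact ⟨measurable_pi_apply 0, fun π hπ => ⟨hπ.1 0, mem_simplex_le_one hπ 0⟩⟩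
    | succ s => rw [Kf_succ_succ]; exact S.Nice_T (ih s) m

/-- K decays geometrically -/
lemma Kf_decay (s : ℕ) : ∀ m, ∀ π ∈ σ, S.Kf m s π ≤ (1 - S.p) ^ s * π 0 := by
  induction s with
  | zero =>
    intro m π hπ
    rw [Kf_m_zero, pow_zero, one_mul]
  | succ s ih =>
    intro m π hπ
    cases m with
    | zero =>
      rw [Kf_zero_succ]
      have h0 : 0 ≤ π 0 := hπ.1 0
      have hp1 : 0 ≤ 1 - S.p := by linarith [S.hp.2]
      positivity
    | succ m =>
      rw [Kf_succ_succ]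
      by_cases h : π ∈ S.contSet m
      · simp only [h, if_true]
        have hmono : S.T (S.Kf m s) π ≤ S.T (fun π' => (1 - S.p) ^ s * π' 0) π := by
          refine S.T_mono (measurable_const.mul (measurable_pi_apply 0)) (B := 1)
            (fun π' hπ' => ?_) (fun π' hπ' => ((S.Nice_Kf m s).2 π' hπ').1)
            (fun π' hπ' => ih m π' hπ') hπ
          have h0 : 0 ≤ π' 0 := hπ'.1 0
          have h1 : π' 0 ≤ 1 := mem_simplex_le_one hπ' 0
          have hp0 : 0 ≤ 1 - S.p := by linarith [S.hp.2]
          have hps : (1 - S.p) ^ s ≤ 1 := pow_le_one₀ hp0 (by linarith [S.hp.1])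
          show |(1 - S.p) ^ s * π' 0| ≤ 1
          rw [abs_of_nonneg (mul_nonneg (pow_nonneg hp0 s) h0)]
          calc (1 - S.p) ^ s * π' 0 ≤ 1 * π' 0 :=
                mul_le_mul_of_nonneg_right hps h0
            _ ≤ 1 := by linarith
        have heq : S.T (fun π' => (1 - S.p) ^ s * π' 0) π
            = (1 - S.p) ^ s * ((1 - S.p) * π 0) := by
          rw [S.T_const_mul, S.T_e hπ]
        calc S.T (S.Kf m s) π ≤ (1 - S.p) ^ s * ((1 - S.p) * π 0) := by
              rw [← heq]; exact hmono
          _ = (1 - S.p) ^ (s + 1) * π 0 := by ring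
      · simp only [h, if_false]
        have h0 : 0 ≤ π 0 := hπ.1 0
        have hp1 : 0 ≤ 1 - S.p := by linarith [S.hp.2]
        positivity

/-- H decomposes below J + K -/
lemma Hf_decomp (s : ℕ) : ∀ m, ∀ π ∈ σ, S.Hf m (s + 1) π ≤ S.Jf m s π + S.Kf m s π := by
  induction s with
  | zero =>
    intro m π hπ
    cases m with
    | zero =>
      rw [Hf_zero_succ, Jf_zero, Kf_m_zero]
      simpa using hπ.1 0
    | succ m =>
      rw [Hf_succ_succ, Jf_succ_zero, Kf_m_zero]
      by_cases h : π ∈ S.contSet m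
      · simp only [h, if_true]
        rw [Hf_m_zero, S.T_one hπ]
        linarith
      · simp only [h, if_false]
        simpa using hπ.1 0
  | succ s ih =>
    intro m π hπ
    cases m with
    | zero =>
      rw [Hf_zero_succ, Jf_zero, Kf_zero_succ]
      norm_num
    | succ m =>
      rw [Hf_succ_succ, Jf_succ_succ, Kf_succ_succ]
      by_cases h : π ∈ S.contSet m
      · simp only [h, if_true]
        have hmono : S.T (S.Hf m (s + 1)) π
            ≤ S.T (fun π' => S.Jf m s π' + S.Kf m s π') π := by
          refine S.T_mono ((S.Nice_Jf m s).1.add (S.Nice_Kf m s).1) (B := 2)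
            (fun π' hπ' => ?_) (fun π' hπ' => ((S.Nice_Hf m (s + 1)).2 π' hπ').1)
            (fun π' hπ' => ih m π' hπ') hπ
          have hJ := (S.Nice_Jf m s).2 π' hπ'
          have hK := (S.Nice_Kf m s).2 π' hπ'
          show |S.Jf m s π' + S.Kf m s π'| ≤ 2
          rw [abs_of_nonneg (by linarith [hJ.1, hK.1])]
          linarith [hJ.2, hK.2]
        rwa [S.T_add (S.Nice_Jf m s).1 (S.Nice_Kf m s).1
          ((S.Nice_Jf m s).abs_le) ((S.Nice_Kf m s).abs_le) hπ] at hmono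
      · simp only [h, if_false]
        norm_num

/-- H is antitone in s -/
lemma Hf_antitone_succ (s : ℕ) : ∀ m, ∀ π ∈ σ, S.Hf m (s + 1) π ≤ S.Hf m s π := by
  induction s with
  | zero =>
    intro m π hπ
    rw [Hf_m_zero]
    exact ((S.Nice_Hf m 1).2 π hπ).2
  | succ s ih =>
    intro m π hπ
    cases m with
    | zero => rw [Hf_zero_succ, Hf_zero_succ]
    | succ m =>
      rw [Hf_succ_succ, Hf_succ_succ]
      by_cases h : π ∈ S.contSet m
      · simp only [h, if_true]
        exact S.T_mono (S.Nice_Hf m s).1 ((S.Nice_Hf m s).abs_le)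
          (fun π' hπ' => ((S.Nice_Hf m (s + 1)).2 π' hπ').1)
          (fun π' hπ' => ih m π' hπ') hπ
      · simp only [h, if_false]
        exact le_rfl

lemma Hf_antitone {m : ℕ} {s s' : ℕ} (h : s ≤ s') {π : Fin (M + 1) → ℝ} (hπ : π ∈ σ) :
    S.Hf m s' π ≤ S.Hf m s π := by
  induction s' with
  | zero => obtain rfl : s = 0 := Nat.le_zero.1 h; exact le_rfl
  | succ s' ih =>
    rcases Nat.lt_or_ge s (s' + 1) with h' | h'
    · exact le_trans (S.Hf_antitone_succ s' m π hπ) (ih (Nat.lt_succ_iff.1 h'))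
    · obtain rfl : s = s' + 1 := le_antisymm h h'
      exact le_rfl

/-- T of a zero function -/
lemma T_zero (π : Fin (M + 1) → ℝ) : S.T (fun _ => (0:ℝ)) π = 0 := by
  rw [T_eq]
  rw [show S.itg (fun _ => (0:ℝ)) π = fun _ => 0 from ?_]
  · exact integral_zero _ _
  · funext x
    unfold itg
    by_cases h : S.Dsum π x = 0 <;> simp [h]

/-- T commutes with finite sums of nice functions -/
lemma T_sum (g : ℕ → (Fin (M + 1) → ℝ) → ℝ) (hg : ∀ s, Nice (g s)) (n : ℕ)
    {π : Fin (M + 1) → ℝ} (hπ : π ∈ σ) :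
    S.T (fun π' => ∑ s ∈ Finset.range n, g s π') π = ∑ s ∈ Finset.range n, S.T (g s) π := by
  induction n with
  | zero => simpa using S.T_zero π
  | succ n ih =>
    have hsum_meas : Measurable fun π' => ∑ s ∈ Finset.range n, g s π' :=
      Finset.measurable_sum _ fun s _ => (hg s).1
    have hsum_bd : ∀ π' ∈ σ, |∑ s ∈ Finset.range n, g s π'| ≤ (n : ℝ) := by
      intro π' hπ'
      calc |∑ s ∈ Finset.range n, g s π'| ≤ ∑ s ∈ Finset.range n, |g s π'| :=
            Finset.abs_sum_le_sum_abs _ _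
        _ ≤ ∑ s ∈ Finset.range n, 1 :=
            Finset.sum_le_sum fun s _ => (hg s).abs_le π' hπ'
        _ = (n : ℝ) := by simp
    rw [show (fun π' => ∑ s ∈ Finset.range (n + 1), g s π')
        = fun π' => (∑ s ∈ Finset.range n, g s π') + g n π' from ?_]
    · rw [S.T_add hsum_meas (hg n).1 hsum_bd ((hg n).abs_le) hπ, ih,
        Finset.sum_range_succ]
    · funext π'
      rw [Finset.sum_range_succ]

/-- expected cost bound: c Σ J ≤ V -/
lemma cost_bound (m : ℕ) : ∀ π ∈ σ, S.c * ∑ s ∈ Finset.range m, S.Jf m s π ≤ S.V m π := by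
  induction m with
  | zero =>
    intro π hπ
    simpa [V_zero] using S.hmin_nonneg hπ
  | succ m ih =>
    intro π hπ
    by_cases h : π ∈ S.contSet m
    · have hJ0 : S.Jf (m + 1) 0 π = 1 - π 0 := by rw [Jf_succ_zero]; simp [h]
      have hJs : ∀ s, S.Jf (m + 1) (s + 1) π = S.T (S.Jf m s) π := by
        intro s; rw [Jf_succ_succ]; simp [h]
      rw [V_succ_of_mem S h]
      have hTmono : S.T (fun π' => S.c * ∑ s ∈ Finset.range m, S.Jf m s π') π
          ≤ S.T (S.V m) π := by
        refine S.T_mono (S.V_meas m) (B := S.L) (fun π' hπ' => S.abs_V_le_L m hπ')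
          (fun π' hπ' => ?_) (fun π' hπ' => ih π' hπ') hπ
        exact mul_nonneg S.hc.le (Finset.sum_nonneg fun s _ => ((S.Nice_Jf m s).2 π' hπ').1)
      have hTlin : S.T (fun π' => S.c * ∑ s ∈ Finset.range m, S.Jf m s π') π
          = S.c * ∑ s ∈ Finset.range m, S.T (S.Jf m s) π := by
        rw [show (fun π' => S.c * ∑ s ∈ Finset.range m, S.Jf m s π')
            = fun π' => S.c * (fun π'' => ∑ s ∈ Finset.range m, S.Jf m s π'') π' from rfl]
        rw [S.T_const_mul, S.T_sum (S.Jf m) (S.Nice_Jf m) m hπ]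
      have hsplit : ∑ s ∈ Finset.range (m + 1), S.Jf (m + 1) s π
          = (1 - π 0) + ∑ s ∈ Finset.range m, S.T (S.Jf m s) π := by
        rw [Finset.sum_range_succ']
        simp only [hJs, hJ0]
        ring
      rw [hsplit, mul_add]
      have := le_trans (le_of_eq hTlin.symm) hTmono
      linarith
    · have hJz : ∀ s, S.Jf (m + 1) s π = 0 := by
        intro s
        cases s with
        | zero => rw [Jf_succ_zero]; simp [h]
        | succ s => rw [Jf_succ_succ]; simp [h]
      rw [V_succ_of_not_mem S h]
      simp only [hJz, Finset.sum_const_zero, mul_zero]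
      exact S.hmin_nonneg hπ

/-- Key comparison: V k ≤ V (k+n) + L · H (k+n) k -/
lemma keyB (n : ℕ) : ∀ k, ∀ π ∈ σ, S.V k π ≤ S.V (k + n) π + S.L * S.Hf (k + n) k π := by
  intro k
  induction k with
  | zero =>
    intro π hπ
    rw [Nat.zero_add, Hf_m_zero, V_zero]
    have h1 : S.hmin π ≤ S.L := S.hmin_le_L hπ
    have h2 : 0 ≤ S.V n π := S.V_nonneg n π hπ
    simp only [mul_one]
    linarith
  | succ k ih =>
    intro π hπ
    have hkn : k + 1 + n = (k + n) + 1 := by omega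
    rw [hkn]
    by_cases h : π ∈ S.contSet (k + n)
    · have hH : S.Hf ((k + n) + 1) (k + 1) π = S.T (S.Hf (k + n) k) π := by
        rw [Hf_succ_succ]; simp [h]
      rw [V_succ_of_mem S h, hH]
      have step1 : S.V (k + 1) π ≤ S.c * (1 - π 0) + S.T (S.V k) π := S.V_succ_le π
      have hg₂m : Measurable fun π' => S.V (k + n) π' + S.L * S.Hf (k + n) k π' :=
        (S.V_meas (k + n)).add (measurable_const.mul (S.Nice_Hf (k + n) k).1)
      have hg₂b : ∀ π' ∈ σ, |S.V (k + n) π' + S.L * S.Hf (k + n) k π'| ≤ S.L + S.L := by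
        intro π' hπ'
        have h1 : |S.V (k + n) π'| ≤ S.L := S.abs_V_le_L (k + n) hπ'
        have h2 := (S.Nice_Hf (k + n) k).2 π' hπ'
        have h3 : 0 ≤ S.V (k + n) π' := S.V_nonneg (k + n) π' hπ'
        rw [abs_of_nonneg h3] at h1
        rw [abs_of_nonneg (by nlinarith [S.L_nonneg])]
        nlinarith [S.L_nonneg]
      have step2 : S.T (S.V k) π
          ≤ S.T (fun π' => S.V (k + n) π' + S.L * S.Hf (k + n) k π') π :=
        S.T_mono hg₂m hg₂b (S.V_nonneg k) ih hπ
      have hb2 : ∀ π' ∈ σ, |S.L * S.Hf (k + n) k π'| ≤ S.L := by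
        intro π' hπ'
        have h2 := (S.Nice_Hf (k + n) k).2 π' hπ'
        rw [abs_of_nonneg (by nlinarith [S.L_nonneg])]
        nlinarith [S.L_nonneg]
      have step3 : S.T (fun π' => S.V (k + n) π' + S.L * S.Hf (k + n) k π') π
          = S.T (S.V (k + n)) π + S.L * S.T (S.Hf (k + n) k) π := by
        rw [S.T_add (g₂ := fun π' => S.L * S.Hf (k + n) k π') (S.V_meas (k + n)) (measurable_const.mul (S.Nice_Hf (k + n) k).1)
          (B₁ := S.L) (fun π' hπ' => S.abs_V_le_L (k + n) hπ') (B₂ := S.L) hb2 hπ]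
        rw [S.T_const_mul]
      linarith
    · have hHnn : 0 ≤ S.L * S.Hf ((k + n) + 1) (k + 1) π :=
        mul_nonneg S.L_nonneg (((S.Nice_Hf ((k + n) + 1) (k + 1)).2 π hπ).1)
      rw [V_succ_of_not_mem S h]
      have := S.V_le_hmin (k + 1) π
      linarith

/-- geometric sum bound -/
lemma geom_bound (N : ℕ) : ∑ s ∈ Finset.range N, (1 - S.p) ^ s ≤ 1 / S.p := by
  have hp0 := S.hp.1
  have hp1 := S.hp.2
  have hne : (1 - S.p) ≠ 1 := by intro h; nlinarith [h]
  rw [geom_sum_eq hne N, show (1:ℝ) - S.p - 1 = -S.p from by ring, div_neg, ← neg_div,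
    neg_sub]
  have hpow : 0 ≤ (1 - S.p) ^ N := pow_nonneg (by linarith) N
  rw [div_le_div_iff₀ hp0 hp0]
  nlinarith

/-- the Markov-type bound : N · H m N ≤ L/c + 1/p for N ≤ m -/
lemma markov_bound {N m : ℕ} (hN : 1 ≤ N) (hNm : N ≤ m) {π : Fin (M + 1) → ℝ}
    (hπ : π ∈ σ) : (N : ℝ) * S.Hf m N π ≤ S.L / S.c + 1 / S.p := by
  have step1 : (N : ℝ) * S.Hf m N π ≤ ∑ s ∈ Finset.range N, S.Hf m (s + 1) π := by
    have hmono : ∀ s ∈ Finset.range N, S.Hf m N π ≤ S.Hf m (s + 1) π := by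
      intro s hs
      exact S.Hf_antitone (Nat.succ_le_of_lt (Finset.mem_range.1 hs)) hπ
    calc (N : ℝ) * S.Hf m N π = ∑ _s ∈ Finset.range N, S.Hf m N π := by
          rw [Finset.sum_const, Finset.card_range, nsmul_eq_mul]
      _ ≤ ∑ s ∈ Finset.range N, S.Hf m (s + 1) π := Finset.sum_le_sum hmono
  have step2 : ∑ s ∈ Finset.range N, S.Hf m (s + 1) π
      ≤ ∑ s ∈ Finset.range N, (S.Jf m s π + S.Kf m s π) :=
    Finset.sum_le_sum fun s _ => S.Hf_decomp s m π hπ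
  have stepJ : ∑ s ∈ Finset.range N, S.Jf m s π ≤ S.L / S.c := by
    have hsub : ∑ s ∈ Finset.range N, S.Jf m s π ≤ ∑ s ∈ Finset.range m, S.Jf m s π :=
      Finset.sum_le_sum_of_subset_of_nonneg
        (Finset.range_subset_range.2 hNm) fun s _ _ => ((S.Nice_Jf m s).2 π hπ).1
    have hcost := S.cost_bound m π hπ
    have hVL : S.V m π ≤ S.L := le_trans (S.V_le_hmin m π) (S.hmin_le_L hπ)
    rw [le_div_iff₀ S.hc]
    calc (∑ s ∈ Finset.range N, S.Jf m s π) * S.c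
        ≤ (∑ s ∈ Finset.range m, S.Jf m s π) * S.c :=
          mul_le_mul_of_nonneg_right hsub S.hc.le
      _ = S.c * ∑ s ∈ Finset.range m, S.Jf m s π := mul_comm _ _
      _ ≤ S.V m π := hcost
      _ ≤ S.L := hVL
  have stepK : ∑ s ∈ Finset.range N, S.Kf m s π ≤ 1 / S.p := by
    have h1 : ∀ s ∈ Finset.range N, S.Kf m s π ≤ (1 - S.p) ^ s := by
      intro s _
      refine le_trans (S.Kf_decay s m π hπ) ?_
      have h2 := mem_simplex_le_one hπ 0
      have hpow : (0:ℝ) ≤ (1 - S.p) ^ s := pow_nonneg (by linarith [S.hp.2]) s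
      nlinarith
    calc ∑ s ∈ Finset.range N, S.Kf m s π ≤ ∑ s ∈ Finset.range N, (1 - S.p) ^ s :=
          Finset.sum_le_sum h1
      _ ≤ 1 / S.p := S.geom_bound N
  calc (N : ℝ) * S.Hf m N π ≤ ∑ s ∈ Finset.range N, (S.Jf m s π + S.Kf m s π) :=
        le_trans step1 step2
    _ = (∑ s ∈ Finset.range N, S.Jf m s π) + ∑ s ∈ Finset.range N, S.Kf m s π :=
        Finset.sum_add_distrib
    _ ≤ S.L / S.c + 1 / S.p := add_le_add stepJ stepK

/-- quantitative truncation bound against finite horizons -/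
lemma quant {N : ℕ} (hN : 1 ≤ N) (n : ℕ) {π : Fin (M + 1) → ℝ} (hπ : π ∈ σ) :
    S.V N π ≤ S.V (N + n) π + (S.L ^ 2 / S.c + S.L / S.p) * (1 / N) := by
  have hkey := S.keyB n N π hπ
  have hmar := S.markov_bound hN (Nat.le_add_right N n) hπ
  have hNpos : (0 : ℝ) < N := by exact_mod_cast hN
  have hHb : S.Hf (N + n) N π ≤ (S.L / S.c + 1 / S.p) / N := by
    rw [le_div_iff₀ hNpos]
    calc S.Hf (N + n) N π * N = (N : ℝ) * S.Hf (N + n) N π := mul_comm _ _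
      _ ≤ S.L / S.c + 1 / S.p := hmar
  have hfin : S.L * S.Hf (N + n) N π ≤ (S.L ^ 2 / S.c + S.L / S.p) * (1 / N) := by
    calc S.L * S.Hf (N + n) N π ≤ S.L * ((S.L / S.c + 1 / S.p) / N) :=
          mul_le_mul_of_nonneg_left hHb S.L_nonneg
      _ = (S.L ^ 2 / S.c + S.L / S.p) * (1 / N) := by ring
  linarith

end DiagSetup

/-- for every `N ≥ 1` and `π ∈ S^M`,
`V₀(π) ≤ V^N(π) ≤ V₀(π) + (‖h‖²/c + ‖h‖/p)/N`, where `‖h‖ = sup_{π∈S^M} |h(π)|`;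
in particular `V^N → V₀` uniformly on `S^M`. -/
theorem truncation_error_bound {E : Type*} [MeasurableSpace E] {M : ℕ}
    (S : DiagSetup E M) (V0 : (Fin (M + 1) → ℝ) → ℝ)
    (hV0 : ∀ π ∈ stdSimplex ℝ (Fin (M + 1)),
      Tendsto (fun N => S.V N π) atTop (nhds (V0 π))) :
    (∀ N : ℕ, 1 ≤ N → ∀ π ∈ stdSimplex ℝ (Fin (M + 1)),
      V0 π ≤ S.V N π ∧
      S.V N π ≤ V0 π
        + ((⨆ π' : stdSimplex ℝ (Fin (M + 1)), |S.hmin π'|) ^ 2 / S.c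
            + (⨆ π' : stdSimplex ℝ (Fin (M + 1)), |S.hmin π'|) / S.p) * (1 / N)) ∧
    TendstoUniformlyOn (fun N => S.V N) V0 atTop (stdSimplex ℝ (Fin (M + 1))) := by
  have hLdef : (⨆ π' : stdSimplex ℝ (Fin (M + 1)), |S.hmin π'|) = S.L := rfl
  set Kc : ℝ := S.L ^ 2 / S.c + S.L / S.p with hKc
  have hKc0 : 0 ≤ Kc := by
    have := S.L_nonneg
    have := S.hc
    have := S.hp.1
    positivity
  have main : ∀ N : ℕ, 1 ≤ N → ∀ π ∈ stdSimplex ℝ (Fin (M + 1)),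
      V0 π ≤ S.V N π ∧ S.V N π ≤ V0 π + Kc * (1 / N) := by
    intro N hN π hπ
    have hlow : V0 π ≤ S.V N π := by
      refine le_of_tendsto (hV0 π hπ) ?_
      exact Filter.eventually_atTop.2 ⟨N, fun n hn => S.V_antitone hn π hπ⟩
    refine ⟨hlow, ?_⟩
    have hquant : ∀ n : ℕ, S.V N π ≤ S.V (n + N) π + Kc * (1 / N) := by
      intro n
      have := S.quant hN n hπ
      rwa [add_comm N n] at this
    have htend : Tendsto (fun n : ℕ => S.V (n + N) π + Kc * (1 / N)) atTop
        (nhds (V0 π + Kc * (1 / N))) := by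
      exact Tendsto.add_const _ ((hV0 π hπ).comp (tendsto_add_atTop_nat N))
    exact ge_of_tendsto htend (Filter.Eventually.of_forall hquant)
  constructor
  · intro N hN π hπ
    rw [hLdef]
    exact main N hN π hπ
  · rw [Metric.tendstoUniformlyOn_iff]
    intro ε hε
    obtain ⟨N₀, hN₀⟩ := exists_nat_gt (Kc / ε)
    refine Filter.eventually_atTop.2 ⟨max N₀ 1, fun N hNlarge π hπ => ?_⟩
    have hN1 : 1 ≤ N := le_trans (le_max_right _ _) hNlarge
    have hNN₀ : N₀ ≤ N := le_trans (le_max_left _ _) hNlarge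
    obtain ⟨hlow, hup⟩ := main N hN1 π hπ
    have hNpos : (0 : ℝ) < N := by exact_mod_cast hN1
    have hKlt : Kc < ε * N := by
      have h1 : Kc / ε < (N₀ : ℝ) := hN₀
      have h2 : (N₀ : ℝ) ≤ N := by exact_mod_cast hNN₀
      have h3 : Kc / ε < (N : ℝ) := lt_of_lt_of_le h1 h2
      calc Kc = Kc / ε * ε := by field_simp
        _ < (N : ℝ) * ε := by exact mul_lt_mul_of_pos_right h3 hε
        _ = ε * N := mul_comm _ _
    have hlt : Kc * (1 / N) < ε := by
      rw [mul_one_div, div_lt_iff₀ hNpos]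
      linarith
    rw [Real.dist_eq, abs_sub_comm, abs_of_nonneg (sub_nonneg.2 hlow)]
    linarith
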